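/- Let G be a finite graph with Laplacian L, U ⊂ V with S = V∖U a Λ-set, ε > 0, and k = 2^l, l ∈ ℕ. Then there exist weights θ_u ∈ ℝ, u ∈ U, such that for every f ∈ L₂(G), |∑_{v∈V} f(v) − ∑_{u∈U} f(u) θ_u| ≤ 2 √|S| Λ^k ‖(εI+L)^k f‖. -/

import Mathlib

open Matrix

/-- The ℓ²-norm of a function on the vertices of a finite graph. -/
noncomputable def gnorm {V : Type*} [Fintype V] (f : V → ℝ) : ℝ :=
  Real.sqrt (∑ v, f v ^ 2)

/-- The operator `εI + L` used in the definition of variational splines. -/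
noncomputable def splineOp {V : Type*} [Fintype V] [DecidableEq V]
    (G : SimpleGraph V) [DecidableRel G.Adj] (ε : ℝ) : Matrix V V ℝ :=
  ε • (1 : Matrix V V ℝ) + G.lapMatrix ℝ

section Aux

variable {V : Type*} [Fintype V] [DecidableEq V]

lemma gnorm_nonneg (f : V → ℝ) : 0 ≤ gnorm f := Real.sqrt_nonneg _

lemma dot_self_nonneg' (f : V → ℝ) : 0 ≤ f ⬝ᵥ f :=
  Finset.sum_nonneg fun i _ => mul_self_nonneg _

lemma gnorm_eq_dot (f : V → ℝ) : gnorm f = Real.sqrt (f ⬝ᵥ f) := by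
  unfold gnorm dotProduct
  congr 1
  exact Finset.sum_congr rfl fun v _ => by rw [sq]

lemma gnorm_sq (f : V → ℝ) : gnorm f ^ 2 = f ⬝ᵥ f := by
  rw [gnorm_eq_dot, Real.sq_sqrt (dot_self_nonneg' f)]

lemma gnorm_eq_norm (x : EuclideanSpace ℝ V) : ‖x‖ = gnorm (fun v => x v) := by
  rw [EuclideanSpace.norm_eq]
  unfold gnorm
  congr 1
  exact Finset.sum_congr rfl fun v _ => by rw [Real.norm_eq_abs, sq_abs]

lemma abs_dot_le (x y : V → ℝ) : |x ⬝ᵥ y| ≤ gnorm x * gnorm y := by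
  have h := Finset.sum_mul_sq_le_sq_mul_sq Finset.univ x y
  have h2 : |x ⬝ᵥ y| = Real.sqrt ((x ⬝ᵥ y) ^ 2) := (Real.sqrt_sq_eq_abs _).symm
  rw [h2]
  unfold gnorm
  rw [← Real.sqrt_mul (by positivity)]
  exact Real.sqrt_le_sqrt h

lemma dot_symm_shift {B : Matrix V V ℝ} (hB : B.IsSymm) (x y : V → ℝ) :
    x ⬝ᵥ (B *ᵥ y) = (B *ᵥ x) ⬝ᵥ y := by
  rw [Matrix.dotProduct_mulVec, ← Matrix.mulVec_transpose, hB]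

lemma sum_mulVec' {ι : Type*} (s : Finset ι) (B : ι → Matrix V V ℝ) (x : V → ℝ) :
    (∑ m ∈ s, B m) *ᵥ x = ∑ m ∈ s, B m *ᵥ x := by
  induction s using Finset.cons_induction with
  | empty => simp
  | cons a s ha ih => simp [Finset.sum_cons, Matrix.add_mulVec, ih]

lemma dot_sum' {ι : Type*} (s : Finset ι) (x : V → ℝ) (y : ι → V → ℝ) :
    x ⬝ᵥ (∑ m ∈ s, y m) = ∑ m ∈ s, x ⬝ᵥ y m := by
  unfold dotProduct
  simp only [Finset.sum_apply, Finset.mul_sum]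
  exact Finset.sum_comm

variable (G : SimpleGraph V) [DecidableRel G.Adj]

lemma lap_pow_dot_nonneg (j : ℕ) (x : V → ℝ) :
    0 ≤ x ⬝ᵥ ((G.lapMatrix ℝ ^ j) *ᵥ x) := by
  have h := ((G.posSemidef_lapMatrix ℝ).pow j).dotProduct_mulVec_nonneg x
  simpa using h

lemma lap_pow_isSymm (j : ℕ) : (G.lapMatrix ℝ ^ j).IsSymm :=
  (G.isSymm_lapMatrix (R := ℝ)).pow j

lemma splineOp_isSymm (ε : ℝ) : (splineOp G ε).IsSymm := by
  unfold splineOp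
  rw [Matrix.IsSymm, Matrix.transpose_add, Matrix.transpose_smul, Matrix.transpose_one,
    G.isSymm_lapMatrix (R := ℝ)]

lemma splineOp_pow_isSymm (ε : ℝ) (j : ℕ) : (splineOp G ε ^ j).IsSymm :=
  (splineOp_isSymm G ε).pow j

/-- `xᵀ L^n x ≤ xᵀ (εI + L)^n x`. -/
lemma lap_pow_le_spline_pow (ε : ℝ) (hε : 0 < ε) (n : ℕ) (x : V → ℝ) :
    x ⬝ᵥ ((G.lapMatrix ℝ ^ n) *ᵥ x) ≤ x ⬝ᵥ ((splineOp G ε ^ n) *ᵥ x) := by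
  have hcomm : Commute (ε • (1 : Matrix V V ℝ)) (G.lapMatrix ℝ) := by
    unfold Commute SemiconjBy
    rw [Matrix.smul_mul, Matrix.mul_smul, Matrix.one_mul, Matrix.mul_one]
  have hterm : ∀ m, x ⬝ᵥ (((ε • (1 : Matrix V V ℝ)) ^ m * G.lapMatrix ℝ ^ (n - m) *
      (n.choose m : Matrix V V ℝ)) *ᵥ x)
      = ε ^ m * ((n.choose m : ℝ) * (x ⬝ᵥ (G.lapMatrix ℝ ^ (n - m) *ᵥ x))) := by
    intro m
    simp only [smul_pow, one_pow, Matrix.smul_mul, Matrix.one_mul,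
      Matrix.smul_mulVec, ← Matrix.mulVec_mulVec, Matrix.natCast_mulVec,
      Matrix.mulVec_smul, dotProduct_smul, smul_eq_mul]
  rw [show splineOp G ε = ε • (1 : Matrix V V ℝ) + G.lapMatrix ℝ from rfl,
    hcomm.add_pow, sum_mulVec', dot_sum']
  have h0 : x ⬝ᵥ ((G.lapMatrix ℝ ^ n) *ᵥ x)
      = x ⬝ᵥ (((ε • (1 : Matrix V V ℝ)) ^ 0 * G.lapMatrix ℝ ^ (n - 0) *
        (n.choose 0 : Matrix V V ℝ)) *ᵥ x) := by
    rw [hterm 0]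
    simp
  rw [h0]
  apply Finset.single_le_sum (f := fun m => x ⬝ᵥ (((ε • (1 : Matrix V V ℝ)) ^ m *
    G.lapMatrix ℝ ^ (n - m) * (n.choose m : Matrix V V ℝ)) *ᵥ x))
  · intro m _
    rw [hterm m]
    have := lap_pow_dot_nonneg G (n - m) x
    positivity
  · simp

/-- Iterate of the Λ-set inequality. -/
lemma lambda_iterate (U : Finset V) (Λ : ℝ) (hΛ : 0 < Λ)
    (hS : ∀ φ : V → ℝ, (∀ v ∈ U, φ v = 0) →
      gnorm φ ≤ Λ * gnorm ((G.lapMatrix ℝ).mulVec φ))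
    (φ : V → ℝ) (hφ : ∀ v ∈ U, φ v = 0) (j : ℕ) :
    gnorm φ ≤ Λ ^ (2 ^ j) * gnorm ((G.lapMatrix ℝ ^ (2 ^ j)) *ᵥ φ) := by
  induction j with
  | zero => simpa using hS φ hφ
  | succ j ih =>
    have hΛm : (0:ℝ) < Λ ^ (2 ^ j) := pow_pos hΛ _
    have hLm : ((G.lapMatrix ℝ) ^ (2 ^ (j + 1))) *ᵥ φ
        = ((G.lapMatrix ℝ) ^ (2 ^ j)) *ᵥ (((G.lapMatrix ℝ) ^ (2 ^ j)) *ᵥ φ) := by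
      rw [Matrix.mulVec_mulVec, ← pow_add, pow_succ, mul_two]
    have hpow : Λ ^ (2 ^ (j+1)) = Λ ^ (2 ^ j) * Λ ^ (2 ^ j) := by
      rw [pow_succ, pow_mul, sq]
    set L := G.lapMatrix ℝ with hLdef
    set ψ := (L ^ (2 ^ j)) *ᵥ φ with hψ
    rcases eq_or_lt_of_le (gnorm_nonneg ψ) with hz | hz
    · -- gnorm ψ = 0
      have h0 : gnorm φ ≤ 0 := by
        have h := ih
        rw [← hz, mul_zero] at h
        exact h
      have hr : 0 ≤ Λ ^ (2 ^ (j+1)) * gnorm ((L ^ (2 ^ (j+1))) *ᵥ φ) := by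
        have := gnorm_nonneg ((L ^ (2 ^ (j+1))) *ᵥ φ)
        positivity
      linarith
    · -- gnorm ψ > 0
      have key : gnorm ψ ^ 2 ≤ gnorm ((L ^ (2 ^ j)) *ᵥ ψ) * gnorm φ := by
        rw [gnorm_sq]
        calc ψ ⬝ᵥ ((L ^ (2 ^ j)) *ᵥ φ)
            = ((L ^ (2 ^ j)) *ᵥ ψ) ⬝ᵥ φ := dot_symm_shift (lap_pow_isSymm G _) ψ φ
          _ ≤ |((L ^ (2 ^ j)) *ᵥ ψ) ⬝ᵥ φ| := le_abs_self _
          _ ≤ gnorm ((L ^ (2 ^ j)) *ᵥ ψ) * gnorm φ := abs_dot_le _ _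
      have key2 : gnorm ψ * gnorm ψ ≤ (Λ ^ (2 ^ j) * gnorm ((L ^ (2 ^ j)) *ᵥ ψ)) * gnorm ψ := by
        have := calc gnorm ψ ^ 2 ≤ gnorm ((L ^ (2 ^ j)) *ᵥ ψ) * gnorm φ := key
          _ ≤ gnorm ((L ^ (2 ^ j)) *ᵥ ψ) * (Λ ^ (2 ^ j) * gnorm ψ) :=
              mul_le_mul_of_nonneg_left ih (gnorm_nonneg _)
          _ = (Λ ^ (2 ^ j) * gnorm ((L ^ (2 ^ j)) *ᵥ ψ)) * gnorm ψ := by ring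
        rw [sq] at this
        exact this
      have hstep : gnorm ψ ≤ Λ ^ (2 ^ j) * gnorm ((L ^ (2 ^ j)) *ᵥ ψ) :=
        le_of_mul_le_mul_right key2 hz
      calc gnorm φ ≤ Λ ^ (2 ^ j) * gnorm ψ := ih
        _ ≤ Λ ^ (2 ^ j) * (Λ ^ (2 ^ j) * gnorm ((L ^ (2 ^ j)) *ᵥ ψ)) :=
            mul_le_mul_of_nonneg_left hstep (le_of_lt hΛm)
        _ = Λ ^ (2 ^ (j+1)) * gnorm ((L ^ (2 ^ (j+1))) *ᵥ φ) := by
            rw [hLm, hpow]; ring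

lemma splineOp_posDef (ε : ℝ) (hε : 0 < ε) : (splineOp G ε).PosDef := by
  refine Matrix.PosDef.of_dotProduct_mulVec_pos ?_ ?_
  · have hL : (G.lapMatrix ℝ).IsHermitian := (G.posSemidef_lapMatrix ℝ).1
    unfold splineOp
    exact Matrix.IsHermitian.add (by simp [Matrix.IsHermitian, Matrix.conjTranspose_smul]) hL
  · intro x hx
    have hstar : star x = x := by
      funext v
      simp
    rw [hstar]
    have hexp : x ⬝ᵥ (splineOp G ε *ᵥ x) = ε * (x ⬝ᵥ x) + x ⬝ᵥ ((G.lapMatrix ℝ) *ᵥ x) := by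
      unfold splineOp
      rw [Matrix.add_mulVec, dotProduct_add, Matrix.smul_mulVec,
        Matrix.one_mulVec, dotProduct_smul]
      simp
    rw [hexp]
    have h1 : 0 < x ⬝ᵥ x :=
      lt_of_le_of_ne (dot_self_nonneg' x)
        (fun h => hx (dotProduct_self_eq_zero.mp h.symm))
    have h2 : 0 ≤ x ⬝ᵥ ((G.lapMatrix ℝ) *ᵥ x) := by
      simpa using lap_pow_dot_nonneg G 1 x
    nlinarith

end Aux

/-- If `S = V \ U` is a `Λ`-set, `ε > 0` and `k = 2^l`, there exist weights `θ_u` such that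
for every `f`, `|∑_{v∈V} f(v) − ∑_{u∈U} f(u) θ_u| ≤ 2 √|S| Λ^k ‖(εI+L)^k f‖`. -/
theorem stmt_9 {V : Type*} [Fintype V] [DecidableEq V]
    (G : SimpleGraph V) [DecidableRel G.Adj]
    (U : Finset V) (Λ : ℝ) (hΛ : 0 < Λ)
    (hS : ∀ φ : V → ℝ, (∀ v ∈ U, φ v = 0) →
      gnorm φ ≤ Λ * gnorm ((G.lapMatrix ℝ).mulVec φ))
    (ε : ℝ) (hε : 0 < ε) (l : ℕ) :
    ∃ θ : V → ℝ, ∀ f : V → ℝ,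
      |∑ v, f v - ∑ u ∈ U, f u * θ u| ≤
        2 * Real.sqrt (Uᶜ.card) * Λ ^ (2 ^ l) *
          gnorm (((splineOp G ε) ^ (2 ^ l)).mulVec f) := by
  classical
  let A : Matrix V V ℝ := (splineOp G ε) ^ (2 ^ l)
  have hMpd : (splineOp G ε).PosDef := splineOp_posDef G ε hε
  have hAdet : IsUnit A.det := by
    show IsUnit ((splineOp G ε) ^ (2 ^ l)).det
    rw [Matrix.det_pow]
    exact isUnit_iff_ne_zero.mpr (pow_ne_zero _ hMpd.det_pos.ne')
  have hAinv1 : A * A⁻¹ = 1 := Matrix.mul_nonsing_inv A hAdet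
  have hAinv2 : A⁻¹ * A = 1 := Matrix.nonsing_inv_mul A hAdet
  have hAA1 : ∀ y : V → ℝ, A *ᵥ (A⁻¹ *ᵥ y) = y := by
    intro y; rw [Matrix.mulVec_mulVec, hAinv1, Matrix.one_mulVec]
  have hAA2 : ∀ y : V → ℝ, A⁻¹ *ᵥ (A *ᵥ y) = y := by
    intro y; rw [Matrix.mulVec_mulVec, hAinv2, Matrix.one_mulVec]
  -- Euclidean space setup
  let toE : (V → ℝ) → EuclideanSpace ℝ V := fun x => WithLp.toLp 2 x
  let W₀ : Submodule ℝ (EuclideanSpace ℝ V) :=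
    { carrier := {φ | ∀ u ∈ U, φ u = 0}
      add_mem' := by
        intro a b ha hb u hu
        have h : (a + b) u = a u + b u := rfl
        rw [h, ha u hu, hb u hu, add_zero]
      zero_mem' := by intro u hu; rfl
      smul_mem' := by
        intro c a ha u hu
        have h : (c • a) u = c * a u := rfl
        rw [h, ha u hu, mul_zero] }
  let mvA : EuclideanSpace ℝ V →ₗ[ℝ] EuclideanSpace ℝ V :=
    { toFun := fun x => toE (A *ᵥ x)
      map_add' := fun x y => by simp [toE, Matrix.mulVec_add]
      map_smul' := fun c x => by simp [toE, Matrix.mulVec_smul] }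
  let W' : Submodule ℝ (EuclideanSpace ℝ V) := W₀.map mvA
  let Q := W'.orthogonalProjectionOnto
  let P : (V → ℝ) → (V → ℝ) := fun f => A⁻¹ *ᵥ (Q (toE (A *ᵥ f)) : EuclideanSpace ℝ V)
  -- P f vanishes on U
  have hPmem : ∀ f : V → ℝ, ∀ u ∈ U, P f u = 0 := by
    intro f
    have hmem : (Q (toE (A *ᵥ f)) : EuclideanSpace ℝ V) ∈ W' := (Q (toE (A *ᵥ f))).2
    rcases hmem with ⟨ψ, hψW, hψeq⟩
    have h : P f = ψ := by
      show A⁻¹ *ᵥ (Q (toE (A *ᵥ f)) : EuclideanSpace ℝ V) = ψ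
      rw [← hψeq]
      exact hAA2 ψ
    rw [h]
    exact hψW
  -- P fixes functions vanishing on U
  have hPfix : ∀ h : V → ℝ, (∀ u ∈ U, h u = 0) → P h = h := by
    intro h hh
    have hmem : toE (A *ᵥ h) ∈ W' := ⟨toE h, hh, rfl⟩
    have heq : (Q (toE (A *ᵥ h)) : EuclideanSpace ℝ V) = toE (A *ᵥ h) :=
      Submodule.starProjection_eq_self_iff.mpr hmem
    show A⁻¹ *ᵥ (Q (toE (A *ᵥ h)) : EuclideanSpace ℝ V) = h
    rw [heq]
    exact hAA2 h
  -- P is linear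
  have hPadd : ∀ f g : V → ℝ, P (f + g) = P f + P g := by
    intro f g
    show A⁻¹ *ᵥ (Q (toE (A *ᵥ (f + g))) : EuclideanSpace ℝ V) = _
    have h1 : toE (A *ᵥ (f + g)) = toE (A *ᵥ f) + toE (A *ᵥ g) :=
      congrArg toE (Matrix.mulVec_add A f g)
    rw [h1, map_add]
    have h2 : ((Q (toE (A *ᵥ f)) + Q (toE (A *ᵥ g)) : W') : EuclideanSpace ℝ V)
        = (Q (toE (A *ᵥ f)) : EuclideanSpace ℝ V)
          + (Q (toE (A *ᵥ g)) : EuclideanSpace ℝ V) := rfl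
    rw [h2]
    exact Matrix.mulVec_add A⁻¹ _ _
  have hPsmul : ∀ (c : ℝ) (f : V → ℝ), P (c • f) = c • P f := by
    intro c f
    show A⁻¹ *ᵥ (Q (toE (A *ᵥ (c • f))) : EuclideanSpace ℝ V) = _
    have h1 : toE (A *ᵥ (c • f)) = c • toE (A *ᵥ f) :=
      congrArg toE (Matrix.mulVec_smul A c f)
    rw [h1, _root_.map_smul]
    have h2 : ((c • Q (toE (A *ᵥ f)) : W') : EuclideanSpace ℝ V)
        = c • (Q (toE (A *ᵥ f)) : EuclideanSpace ℝ V) := rfl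
    rw [h2]
    exact Matrix.mulVec_smul A⁻¹ c _
  let Plin : (V → ℝ) →ₗ[ℝ] (V → ℝ) :=
    { toFun := P
      map_add' := hPadd
      map_smul' := fun c f => hPsmul c f }
  -- norm bound for P
  have hQnorm : ∀ x : EuclideanSpace ℝ V, ‖(Q x : EuclideanSpace ℝ V)‖ ≤ ‖x‖ := by
    intro x
    calc ‖(Q x : EuclideanSpace ℝ V)‖ = ‖Q x‖ := rfl
      _ ≤ ‖Q‖ * ‖x‖ := Q.le_opNorm x
      _ ≤ 1 * ‖x‖ :=
          mul_le_mul_of_nonneg_right (Submodule.orthogonalProjectionOnto_norm_le W') (norm_nonneg x)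
      _ = ‖x‖ := one_mul _
  have hPnorm : ∀ f : V → ℝ, gnorm (A *ᵥ P f) ≤ gnorm (A *ᵥ f) := by
    intro f
    have h1 : A *ᵥ P f = (Q (toE (A *ᵥ f)) : EuclideanSpace ℝ V) := hAA1 _
    have h2 := hQnorm (toE (A *ᵥ f))
    rw [gnorm_eq_norm (Q (toE (A *ᵥ f)) : EuclideanSpace ℝ V),
      gnorm_eq_norm (toE (A *ᵥ f))] at h2
    rw [h1]
    exact h2
  -- the weights
  let θ : V → ℝ := fun u => ∑ v, ((Pi.single u 1 : V → ℝ) v - P (Pi.single u 1 : V → ℝ) v)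
  refine ⟨θ, fun f => ?_⟩
  -- decomposition of f
  let g : V → ℝ := ∑ u ∈ U, f u • (Pi.single u 1 : V → ℝ)
  have hgdef : g = ∑ u ∈ U, f u • (Pi.single u 1 : V → ℝ) := rfl
  have hgval : ∀ v, g v = ∑ u ∈ U, f u * (Pi.single u 1 : V → ℝ) v := by
    intro v
    rw [hgdef]
    simp [Finset.sum_apply]
  have hgU : ∀ v ∈ U, g v = f v := by
    intro v hv
    rw [hgval v]
    have : ∀ u ∈ U, f u * (Pi.single u 1 : V → ℝ) v = if v = u then f u else 0 := by
      intro u _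
      rw [Pi.single_apply]
      split <;> simp
    rw [Finset.sum_congr rfl this, Finset.sum_ite_eq U v f, if_pos hv]
  have hh : ∀ u ∈ U, (f - g) u = 0 := by
    intro u hu
    have : (f - g) u = f u - g u := rfl
    rw [this, hgU u hu, sub_self]
  have hfdecomp : P f = P g + (f - g) := by
    have hfg : g + (f - g) = f := by abel
    calc P f = P (g + (f - g)) := by rw [hfg]
      _ = P g + P (f - g) := hPadd _ _
      _ = P g + (f - g) := by rw [hPfix _ hh]
  have hPg : P g = ∑ u ∈ U, f u • P (Pi.single u 1 : V → ℝ) := by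
    show Plin g = ∑ u ∈ U, f u • Plin (Pi.single u 1 : V → ℝ)
    rw [hgdef, map_sum]
    exact Finset.sum_congr rfl fun u _ => by rw [_root_.map_smul]
  -- the sum identity
  have hsum1 : ∑ u ∈ U, f u * θ u = ∑ v, (f v - P f v) := by
    have e1 : ∑ u ∈ U, f u * θ u
        = ∑ v, ∑ u ∈ U, f u * ((Pi.single u 1 : V → ℝ) v - P (Pi.single u 1 : V → ℝ) v) := by
      rw [Finset.sum_comm]
      exact Finset.sum_congr rfl fun u _ => by rw [Finset.mul_sum]
    rw [e1]
    refine Finset.sum_congr rfl fun v _ => ?_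
    have e2 : ∑ u ∈ U, f u * ((Pi.single u 1 : V → ℝ) v - P (Pi.single u 1 : V → ℝ) v)
        = g v - P g v := by
      rw [hgval v, hPg]
      rw [Finset.sum_apply]
      simp only [Pi.smul_apply, smul_eq_mul, mul_sub]
      rw [Finset.sum_sub_distrib]
    rw [e2]
    have e3 : f v - P f v = g v - P g v := by
      rw [hfdecomp]
      have : (P g + (f - g)) v = P g v + (f v - g v) := rfl
      rw [this]
      ring
    rw [e3]
  have hmain : ∑ v, f v - ∑ u ∈ U, f u * θ u = ∑ v, P f v := by
    rw [hsum1, Finset.sum_sub_distrib]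
    ring
  rw [hmain]
  -- the estimate
  have hφU : ∀ u ∈ U, P f u = 0 := hPmem f
  have h1 : ∑ v, P f v = ∑ v ∈ Uᶜ, P f v := by
    refine (Finset.sum_subset (Finset.subset_univ Uᶜ) fun v _ hv => ?_).symm
    exact hφU v (by simpa using hv)
  have h2 : |∑ v ∈ Uᶜ, P f v| ≤ Real.sqrt (Uᶜ.card) * gnorm (P f) := by
    have hcs := Finset.sum_mul_sq_le_sq_mul_sq Uᶜ (fun _ => (1:ℝ)) (P f)
    have hle : (∑ v ∈ Uᶜ, P f v) ^ 2 ≤ (Uᶜ.card : ℝ) * ∑ v, P f v ^ 2 := by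
      calc (∑ v ∈ Uᶜ, P f v) ^ 2 = (∑ v ∈ Uᶜ, 1 * P f v) ^ 2 := by simp
        _ ≤ (∑ v ∈ Uᶜ, (1:ℝ) ^ 2) * ∑ v ∈ Uᶜ, P f v ^ 2 := hcs
        _ = (Uᶜ.card : ℝ) * ∑ v ∈ Uᶜ, P f v ^ 2 := by simp
        _ ≤ (Uᶜ.card : ℝ) * ∑ v, P f v ^ 2 := by
            refine mul_le_mul_of_nonneg_left ?_ (Nat.cast_nonneg _)
            exact Finset.sum_le_sum_of_subset_of_nonneg (Finset.subset_univ _)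
              fun v _ _ => sq_nonneg _
    have h := Real.sqrt_le_sqrt hle
    rw [Real.sqrt_sq_eq_abs, Real.sqrt_mul (Nat.cast_nonneg _)] at h
    exact h
  have h3 : gnorm (P f) ≤ Λ ^ (2 ^ l) * gnorm ((G.lapMatrix ℝ ^ (2 ^ l)) *ᵥ P f) :=
    lambda_iterate G U Λ hΛ hS (P f) hφU l
  have h4 : gnorm ((G.lapMatrix ℝ ^ (2 ^ l)) *ᵥ P f) ≤ gnorm (A *ᵥ P f) := by
    have hsq : gnorm ((G.lapMatrix ℝ ^ (2 ^ l)) *ᵥ P f) ^ 2 ≤ gnorm (A *ᵥ P f) ^ 2 := by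
      rw [gnorm_sq, gnorm_sq]
      have eL : ((G.lapMatrix ℝ ^ (2 ^ l)) *ᵥ P f) ⬝ᵥ ((G.lapMatrix ℝ ^ (2 ^ l)) *ᵥ P f)
          = P f ⬝ᵥ ((G.lapMatrix ℝ ^ (2 ^ l + 2 ^ l)) *ᵥ P f) := by
        rw [dot_symm_shift (lap_pow_isSymm G _) ((G.lapMatrix ℝ ^ (2 ^ l)) *ᵥ P f) (P f),
          Matrix.mulVec_mulVec, ← pow_add]
        exact dotProduct_comm _ _
      have eM : (A *ᵥ P f) ⬝ᵥ (A *ᵥ P f)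
          = P f ⬝ᵥ ((splineOp G ε ^ (2 ^ l + 2 ^ l)) *ᵥ P f) := by
        show ((splineOp G ε ^ (2 ^ l)) *ᵥ P f) ⬝ᵥ ((splineOp G ε ^ (2 ^ l)) *ᵥ P f) = _
        rw [dot_symm_shift (splineOp_pow_isSymm G ε _)
          ((splineOp G ε ^ (2 ^ l)) *ᵥ P f) (P f), Matrix.mulVec_mulVec, ← pow_add]
        exact dotProduct_comm _ _
      rw [eL, eM]
      exact lap_pow_le_spline_pow G ε hε (2 ^ l + 2 ^ l) (P f)
    exact le_of_pow_le_pow_left₀ two_ne_zero (gnorm_nonneg _) hsq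
  have h5 : gnorm (A *ᵥ P f) ≤ gnorm (A *ᵥ f) := hPnorm f
  have hfinal : |∑ v, P f v| ≤ Real.sqrt (Uᶜ.card) * (Λ ^ (2 ^ l) * gnorm (A *ᵥ f)) := by
    rw [h1]
    have hc : (0:ℝ) ≤ Real.sqrt (Uᶜ.card) := Real.sqrt_nonneg _
    have hp : (0:ℝ) < Λ ^ (2 ^ l) := pow_pos hΛ _
    calc |∑ v ∈ Uᶜ, P f v| ≤ Real.sqrt (Uᶜ.card) * gnorm (P f) := h2
      _ ≤ Real.sqrt (Uᶜ.card) * (Λ ^ (2 ^ l) * gnorm ((G.lapMatrix ℝ ^ (2 ^ l)) *ᵥ P f)) :=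
          mul_le_mul_of_nonneg_left h3 hc
      _ ≤ Real.sqrt (Uᶜ.card) * (Λ ^ (2 ^ l) * gnorm (A *ᵥ P f)) := by
          refine mul_le_mul_of_nonneg_left (mul_le_mul_of_nonneg_left h4 hp.le) hc
      _ ≤ Real.sqrt (Uᶜ.card) * (Λ ^ (2 ^ l) * gnorm (A *ᵥ f)) := by
          refine mul_le_mul_of_nonneg_left (mul_le_mul_of_nonneg_left h5 hp.le) hc
  have hrhs : gnorm (((splineOp G ε) ^ (2 ^ l)).mulVec f) = gnorm (A *ᵥ f) := rfl
  rw [hrhs]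
  have hN : 0 ≤ gnorm (A *ᵥ f) := gnorm_nonneg _
  have hc : (0:ℝ) ≤ Real.sqrt (Uᶜ.card) := Real.sqrt_nonneg _
  have hp : (0:ℝ) < Λ ^ (2 ^ l) := pow_pos hΛ _
  nlinarith [hfinal, mul_nonneg (mul_nonneg hc hp.le) hN]
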